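/- For h(x,y,z) = x(x² + y² + z²), at every point p with h(p) = 1 and x > 1/∛4, the Hessian ∂²h(p) is positive definite. Consequently there is no point p with h(p) = 1 at which −∂²h(p) restricted to ker dh(p) is positive definite (h is not hyperbolic). -/

import Mathlib

/-- Partial derivative of a function of 3 real variables. -/
noncomputable def pd3 (f : (Fin 3 → ℝ) → ℝ) (i : Fin 3) (p : Fin 3 → ℝ) : ℝ :=
  deriv (fun t => f (Function.update p i t)) (p i)

/-- Hessian matrix of second partial derivatives. -/
noncomputable def hess3 (f : (Fin 3 → ℝ) → ℝ) (p : Fin 3 → ℝ) : Matrix (Fin 3) (Fin 3) ℝ :=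
  Matrix.of fun i j => pd3 (fun q => pd3 f j q) i p

lemma pdcalc (f : (Fin 3 → ℝ) → ℝ) (i : Fin 3) (p : Fin 3 → ℝ) (g : ℝ → ℝ) (d : ℝ)
    (he : ∀ t, f (Function.update p i t) = g t) (hd : HasDerivAt g d (p i)) :
    pd3 f i p = d := by
  unfold pd3
  rw [show (fun t => f (Function.update p i t)) = g from funext he]
  exact hd.deriv

variable {h : (Fin 3 → ℝ) → ℝ}

lemma aux_d0 (hdef : ∀ p : Fin 3 → ℝ, h p = p 0 * ((p 0) ^ 2 + (p 1) ^ 2 + (p 2) ^ 2))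
    (p : Fin 3 → ℝ) : pd3 h 0 p = 3 * p 0 ^ 2 + p 1 ^ 2 + p 2 ^ 2 := by
  refine (pdcalc h 0 p (fun t => t ^ 3 + (p 1 ^ 2 + p 2 ^ 2) * t)
      (3 * p 0 ^ 2 + (p 1 ^ 2 + p 2 ^ 2))
      (fun t => by rw [hdef]; simp only [Function.update_apply, Fin.reduceEq, reduceIte]; ring)
      ?_).trans (by ring)
  have H := (hasDerivAt_pow 3 (p 0)).add ((hasDerivAt_id' (p 0)).const_mul (p 1 ^ 2 + p 2 ^ 2))
  exact H.congr_deriv (by push_cast; ring)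

lemma aux_d1 (hdef : ∀ p : Fin 3 → ℝ, h p = p 0 * ((p 0) ^ 2 + (p 1) ^ 2 + (p 2) ^ 2))
    (p : Fin 3 → ℝ) : pd3 h 1 p = 2 * p 0 * p 1 := by
  refine pdcalc h 1 p (fun t => p 0 * t ^ 2 + (p 0 ^ 3 + p 0 * p 2 ^ 2)) (2 * p 0 * p 1)
      (fun t => by rw [hdef]; simp only [Function.update_apply, Fin.reduceEq, reduceIte]; ring) ?_
  have H := ((hasDerivAt_pow 2 (p 1)).const_mul (p 0)).add_const (p 0 ^ 3 + p 0 * p 2 ^ 2)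
  exact H.congr_deriv (by push_cast; ring)

lemma aux_d2 (hdef : ∀ p : Fin 3 → ℝ, h p = p 0 * ((p 0) ^ 2 + (p 1) ^ 2 + (p 2) ^ 2))
    (p : Fin 3 → ℝ) : pd3 h 2 p = 2 * p 0 * p 2 := by
  refine pdcalc h 2 p (fun t => p 0 * t ^ 2 + (p 0 ^ 3 + p 0 * p 1 ^ 2)) (2 * p 0 * p 2)
      (fun t => by rw [hdef]; simp only [Function.update_apply, Fin.reduceEq, reduceIte]; ring) ?_
  have H := ((hasDerivAt_pow 2 (p 2)).const_mul (p 0)).add_const (p 0 ^ 3 + p 0 * p 1 ^ 2)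
  exact H.congr_deriv (by push_cast; ring)

lemma aux_hess (hdef : ∀ p : Fin 3 → ℝ, h p = p 0 * ((p 0) ^ 2 + (p 1) ^ 2 + (p 2) ^ 2))
    (p : Fin 3 → ℝ) :
    hess3 h p = !![6 * p 0, 2 * p 1, 2 * p 2; 2 * p 1, 2 * p 0, 0; 2 * p 2, 0, 2 * p 0] := by
  have f0 : (fun q => pd3 h 0 q) = fun q : Fin 3 → ℝ => 3 * q 0 ^ 2 + (q 1 ^ 2 + q 2 ^ 2) := by
    funext q; rw [aux_d0 hdef]; ring
  have f1 : (fun q => pd3 h 1 q) = fun q : Fin 3 → ℝ => 2 * q 0 * q 1 := funext (aux_d1 hdef)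
  have f2 : (fun q => pd3 h 2 q) = fun q : Fin 3 → ℝ => 2 * q 0 * q 2 := funext (aux_d2 hdef)
  have e00 : hess3 h p 0 0 = 6 * p 0 := by
    show pd3 (fun q => pd3 h 0 q) 0 p = _
    rw [f0]
    refine pdcalc _ 0 p (fun t => 3 * t ^ 2 + (p 1 ^ 2 + p 2 ^ 2)) (6 * p 0)
      (fun t => by simp only [Function.update_apply, Fin.reduceEq, reduceIte]) ?_
    have H := ((hasDerivAt_pow 2 (p 0)).const_mul (3:ℝ)).add_const (p 1 ^ 2 + p 2 ^ 2)
    exact H.congr_deriv (by push_cast; ring)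
  have e01 : hess3 h p 0 1 = 2 * p 1 := by
    show pd3 (fun q => pd3 h 1 q) 0 p = _
    rw [f1]
    refine pdcalc _ 0 p (fun t => (2 * p 1) * t) (2 * p 1)
      (fun t => by simp only [Function.update_apply, Fin.reduceEq, reduceIte]; ring) ?_
    simpa using (hasDerivAt_id' (p 0)).const_mul (2 * p 1)
  have e02 : hess3 h p 0 2 = 2 * p 2 := by
    show pd3 (fun q => pd3 h 2 q) 0 p = _
    rw [f2]
    refine pdcalc _ 0 p (fun t => (2 * p 2) * t) (2 * p 2)
      (fun t => by simp only [Function.update_apply, Fin.reduceEq, reduceIte]; ring) ?_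
    simpa using (hasDerivAt_id' (p 0)).const_mul (2 * p 2)
  have e10 : hess3 h p 1 0 = 2 * p 1 := by
    show pd3 (fun q => pd3 h 0 q) 1 p = _
    rw [f0]
    refine pdcalc _ 1 p (fun t => t ^ 2 + (3 * p 0 ^ 2 + p 2 ^ 2)) (2 * p 1)
      (fun t => by simp only [Function.update_apply, Fin.reduceEq, reduceIte]; ring) ?_
    simpa using (hasDerivAt_pow 2 (p 1)).add_const (3 * p 0 ^ 2 + p 2 ^ 2)
  have e11 : hess3 h p 1 1 = 2 * p 0 := by
    show pd3 (fun q => pd3 h 1 q) 1 p = _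
    rw [f1]
    refine pdcalc _ 1 p (fun t => (2 * p 0) * t) (2 * p 0)
      (fun t => by simp only [Function.update_apply, Fin.reduceEq, reduceIte]) ?_
    simpa using (hasDerivAt_id' (p 1)).const_mul (2 * p 0)
  have e12 : hess3 h p 1 2 = 0 := by
    show pd3 (fun q => pd3 h 2 q) 1 p = _
    rw [f2]
    exact pdcalc _ 1 p (fun _ => 2 * p 0 * p 2) 0
      (fun t => by simp only [Function.update_apply, Fin.reduceEq, reduceIte])
      (hasDerivAt_const _ _)
  have e20 : hess3 h p 2 0 = 2 * p 2 := by
    show pd3 (fun q => pd3 h 0 q) 2 p = _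
    rw [f0]
    refine pdcalc _ 2 p (fun t => t ^ 2 + (3 * p 0 ^ 2 + p 1 ^ 2)) (2 * p 2)
      (fun t => by simp only [Function.update_apply, Fin.reduceEq, reduceIte]; ring) ?_
    simpa using (hasDerivAt_pow 2 (p 2)).add_const (3 * p 0 ^ 2 + p 1 ^ 2)
  have e21 : hess3 h p 2 1 = 0 := by
    show pd3 (fun q => pd3 h 1 q) 2 p = _
    rw [f1]
    exact pdcalc _ 2 p (fun _ => 2 * p 0 * p 1) 0
      (fun t => by simp only [Function.update_apply, Fin.reduceEq, reduceIte])
      (hasDerivAt_const _ _)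
  have e22 : hess3 h p 2 2 = 2 * p 0 := by
    show pd3 (fun q => pd3 h 2 q) 2 p = _
    rw [f2]
    refine pdcalc _ 2 p (fun t => (2 * p 0) * t) (2 * p 0)
      (fun t => by simp only [Function.update_apply, Fin.reduceEq, reduceIte]) ?_
    simpa using (hasDerivAt_id' (p 2)).const_mul (2 * p 0)
  rw [Matrix.eta_fin_three (hess3 h p), e00, e01, e02, e10, e11, e12, e20, e21, e22]

/-- For h(x,y,z) = x(x² + y² + z²): at every point of {h = 1} with x > 1/∛4 the
Hessian ∂²h is positive definite; consequently there is no point of {h = 1} at which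
−∂²h is positive definite on ker dh, i.e. h is not hyperbolic. -/
theorem stmt2 (h : (Fin 3 → ℝ) → ℝ)
    (hdef : ∀ p : Fin 3 → ℝ, h p = p 0 * ((p 0) ^ 2 + (p 1) ^ 2 + (p 2) ^ 2)) :
    (∀ p : Fin 3 → ℝ, h p = 1 → (1 : ℝ) / (4 : ℝ) ^ ((1 : ℝ) / 3) < p 0 →
      (hess3 h p).PosDef) ∧
    ¬ ∃ p : Fin 3 → ℝ, h p = 1 ∧
      ∀ v : Fin 3 → ℝ, v ≠ 0 → (∑ i, pd3 h i p * v i) = 0 →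
        0 < dotProduct v ((-(hess3 h p)).mulVec v) := by
  constructor
  · intro p hp1 hx
    rw [hdef] at hp1
    set x := p 0 with hx0def
    set y := p 1
    set z := p 2
    have hc : (0:ℝ) < (4 : ℝ) ^ ((1 : ℝ) / 3) := Real.rpow_pos_of_pos (by norm_num) _
    have hc3 : ((4 : ℝ) ^ ((1 : ℝ) / 3)) ^ (3:ℕ) = 4 := by
      rw [← Real.rpow_natCast ((4:ℝ) ^ ((1:ℝ)/3)) 3, ← Real.rpow_mul (by norm_num)]
      norm_num
    have x0 : 0 < x := lt_trans (by positivity) hx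
    have h4 : 1 < 4 * x ^ 3 := by
      have := pow_lt_pow_left₀ hx (by positivity : (0:ℝ) ≤ 1 / (4:ℝ) ^ ((1:ℝ)/3)) (by norm_num : 3 ≠ 0)
      rw [div_pow, one_pow, hc3] at this
      nlinarith [this]
    rw [aux_hess hdef p]
    refine Matrix.posDef_iff_dotProduct_mulVec.mpr ⟨?_, fun v hv => ?_⟩
    · ext i j
      fin_cases i <;> fin_cases j <;> simp [Matrix.conjTranspose_apply]
    · have hv' : v 0 ≠ 0 ∨ v 1 ≠ 0 ∨ v 2 ≠ 0 := by
        by_contra hcon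
        push_neg at hcon
        exact hv (funext fun i => by fin_cases i <;>
          simp [hcon.1, hcon.2.1, hcon.2.2])
      simp only [Matrix.mulVec, dotProduct, Fin.sum_univ_three, RCLike.star_def,
        Pi.star_apply, star_trivial, RCLike.re_to_real]
      simp [Fin.sum_univ_three]
      by_cases hv0 : v 0 = 0
      · rw [hv0]
        rcases hv' with h0 | h1 | h2
        · exact absurd hv0 h0
        · nlinarith [mul_pos x0 (by positivity : (0:ℝ) < v 1 ^ 2), mul_nonneg x0.le (sq_nonneg (v 2))]
        · nlinarith [mul_pos x0 (by positivity : (0:ℝ) < v 2 ^ 2), mul_nonneg x0.le (sq_nonneg (v 1))]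
      · have hv0sq : 0 < v 0 ^ 2 := by positivity
        nlinarith [mul_nonneg x0.le (sq_nonneg (x * v 1 + y * v 0)),
          mul_nonneg x0.le (sq_nonneg (x * v 2 + z * v 0)),
          mul_pos (show (0:ℝ) < 8 * x ^ 3 - 2 by nlinarith) hv0sq,
          mul_pos x0 x0, sq_nonneg (v 0), hp1]
  · rintro ⟨p, hp1, hpd⟩
    rw [hdef] at hp1
    have x0 : 0 < p 0 := by nlinarith [sq_nonneg (p 0), sq_nonneg (p 1), sq_nonneg (p 2)]
    by_cases hyz : p 1 = 0 ∧ p 2 = 0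
    · have H := hpd ![0, 1, 0] (by
        intro hcon
        have := congrFun hcon 1
        simp at this)
        (by rw [Fin.sum_univ_three, aux_d0 hdef, aux_d1 hdef, aux_d2 hdef]
            simp [hyz.1])
      rw [aux_hess hdef] at H
      simp [Matrix.mulVec, dotProduct, Fin.sum_univ_three] at H
      nlinarith [H]
    · have hne : p 1 ≠ 0 ∨ p 2 ≠ 0 := by tauto
      have hvne : (![0, -p 2, p 1] : Fin 3 → ℝ) ≠ 0 := by
        intro hcon
        rcases hne with h1 | h2
        · exact h1 (by simpa using congrFun hcon 2)
        · exact h2 (by simpa [neg_eq_zero] using congrFun hcon 1)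
      have H := hpd ![0, -p 2, p 1] hvne
        (by rw [Fin.sum_univ_three, aux_d0 hdef, aux_d1 hdef, aux_d2 hdef]
            simp; ring)
      rw [aux_hess hdef] at H
      simp [Matrix.mulVec, dotProduct, Fin.sum_univ_three] at H
      have hyz2 : 0 < p 1 ^ 2 + p 2 ^ 2 := by
        rcases hne with h1 | h2
        · positivity
        · positivity
      nlinarith [mul_pos x0 hyz2]
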